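/- Let λ > 0 and let J denote the 3×3 Jacobian matrix of the reduced vector field F at the critical point P₃ = ((2−λ²)/(2√3(λ²+1)), √(λ²+2)/(√2(λ²+1)), λ/(λ²+1)). Then the characteristic polynomial of J factors as (X + (λ²+2)/(2(λ²+1)))·(X² + ((λ²+2)/(2(λ²+1)))·X + (λ²+2)(λ²−2)/(2(λ²+1)²)); equivalently, the eigenvalues are ε₁ = −(λ²+2)/(2(λ²+1)) and ε₂,₃ = (−(λ²+2) ± √((18−7λ²)(λ²+2)))/(4(λ²+1)). -/

import Mathlib

set_option maxHeartbeats 4000000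
open Polynomial Matrix

noncomputable def Fvec (lam : ℝ) (x : Fin 3 → ℝ) : Fin 3 → ℝ :=
  ![-1 / (3 * Real.sqrt 3) - (2 / 3) * x 0 + x 0 ^ 2 / Real.sqrt 3
      + x 1 ^ 2 / Real.sqrt 3 + x 2 ^ 2 / (2 * Real.sqrt 3)
      + 2 * x 0 ^ 3 - x 0 * x 1 ^ 2 + x 0 * x 2 ^ 2,
    x 1 * (1 / 3 - (lam / 2) * x 2 + 2 * x 0 ^ 2 - x 1 ^ 2 + x 2 ^ 2),
    -(2 / 3) * x 2 + lam * x 1 ^ 2 + 2 * x 0 ^ 2 * x 2 - x 1 ^ 2 * x 2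
      + x 2 ^ 3]

noncomputable def jac (lam : ℝ) (x : Fin 3 → ℝ) : Matrix (Fin 3) (Fin 3) ℝ :=
  Matrix.of fun i j => deriv (fun s => Fvec lam (Function.update x j s) i) (x j)

lemma charpoly_fin3' (M : Matrix (Fin 3) (Fin 3) ℝ) :
    M.charpoly = X^3 - C (M 0 0 + M 1 1 + M 2 2) * X^2
      + C (M 0 0 * M 1 1 + M 0 0 * M 2 2 + M 1 1 * M 2 2
          - M 0 1 * M 1 0 - M 0 2 * M 2 0 - M 1 2 * M 2 1) * X
      - C (M 0 0 * M 1 1 * M 2 2 - M 0 0 * M 1 2 * M 2 1 - M 0 1 * M 1 0 * M 2 2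
          + M 0 1 * M 1 2 * M 2 0 + M 0 2 * M 1 0 * M 2 1 - M 0 2 * M 1 1 * M 2 0) := by
  rw [Matrix.charpoly, Matrix.det_fin_three,
    charmatrix_apply_eq, charmatrix_apply_eq, charmatrix_apply_eq,
    charmatrix_apply_ne M 0 1 (by decide), charmatrix_apply_ne M 0 2 (by decide),
    charmatrix_apply_ne M 1 0 (by decide), charmatrix_apply_ne M 1 2 (by decide),
    charmatrix_apply_ne M 2 0 (by decide), charmatrix_apply_ne M 2 1 (by decide)]
  simp only [C_add, C_sub, C_mul]
  ring

lemma cubic_factor (A B Cc p q : ℝ) (h2 : A = -(p + p)) (h1 : B = q + p^2)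
    (h0 : Cc = -(p*q)) :
    (X:ℝ[X])^3 - C A * X^2 + C B * X - C Cc = (X + C p) * (X^2 + C p * X + C q) := by
  subst h2 h1 h0
  simp only [C_neg, C_add, C_mul, C_pow]
  ring

lemma quad_factor (r2 r3 p q : ℝ) (hs : r2 + r3 = -p) (hp : r2 * r3 = q) :
    ((X:ℝ[X]) - C r2) * (X - C r3) = X^2 + C p * X + C q := by
  have hq : q = r2 * r3 := hp.symm
  have hpp : p = -(r2 + r3) := by rw [hs]; ring
  subst hq hpp
  simp only [C_neg, C_add, C_mul]
  ring

lemma cubic_deriv (A B C3 D c : ℝ) :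
    deriv (fun s : ℝ => A + B*s + C3*s^2 + D*s^3) c = B + 2*C3*c + 3*D*c^2 := by
  have h : HasDerivAt (fun s : ℝ => A + B*s + C3*s^2 + D*s^3)
      (B + 2*C3*c + 3*D*c^2) c := by
    have h4 := ((((hasDerivAt_id c).const_mul B).const_add A).add
      ((hasDerivAt_pow 2 c).const_mul C3)).add ((hasDerivAt_pow 3 c).const_mul D)
    refine h4.congr_deriv ?_
    push_cast; ring
  exact h.deriv

lemma jac_eq (lam S U P : ℝ) :
    jac lam ![S, U, P] =
      !![-2/3 - U^2 + P^2 + 2*S/Real.sqrt 3 + 6*S^2,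
         2*(1/Real.sqrt 3 - S)*U,
         2*(1/(2*Real.sqrt 3) + S)*P;
         4*U*S,
         1/3 - lam/2*P + 2*S^2 + P^2 - 3*U^2,
         -(U*(lam/2)) + 2*U*P;
         4*P*S,
         2*(lam - P)*U,
         -2/3 + 2*S^2 - U^2 + 3*P^2] := by
  refine Matrix.ext fun i j => ?_
  fin_cases i <;> fin_cases j
  · show deriv (fun s => Fvec lam (Function.update ![S,U,P] 0 s) 0) S = _
    rw [show (fun s => Fvec lam (Function.update ![S,U,P] 0 s) 0)
        = fun s : ℝ => (-1/(3*Real.sqrt 3) + U^2/Real.sqrt 3 + P^2/(2*Real.sqrt 3))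
            + (-2/3 - U^2 + P^2)*s + (1/Real.sqrt 3)*s^2 + 2*s^3
      from funext fun s => by simp [Fvec, Function.update_apply]; try ring; try exact Or.inl trivial, cubic_deriv]
    simp only [Matrix.of_apply, Matrix.cons_val', Matrix.cons_val_zero, Matrix.empty_val',
      Matrix.cons_val_fin_one, Matrix.cons_val_one, Matrix.head_cons,
      Matrix.head_fin_const, Fin.zero_eta, Fin.mk_one, Fin.reduceFinMk, Matrix.cons_val_two,
      Matrix.tail_cons]
    ring
  · show deriv (fun s => Fvec lam (Function.update ![S,U,P] 1 s) 0) U = _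
    rw [show (fun s => Fvec lam (Function.update ![S,U,P] 1 s) 0)
        = fun s : ℝ => (-1/(3*Real.sqrt 3) - (2/3)*S + S^2/Real.sqrt 3 + P^2/(2*Real.sqrt 3) + 2*S^3 + S*P^2)
            + 0*s + (1/Real.sqrt 3 - S)*s^2 + 0*s^3
      from funext fun s => by simp [Fvec, Function.update_apply]; try ring; try exact Or.inl trivial, cubic_deriv]
    simp only [Matrix.of_apply, Matrix.cons_val', Matrix.cons_val_zero, Matrix.empty_val',
      Matrix.cons_val_fin_one, Matrix.cons_val_one, Matrix.head_cons,
      Matrix.head_fin_const, Fin.zero_eta, Fin.mk_one, Fin.reduceFinMk, Matrix.cons_val_two,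
      Matrix.tail_cons]
    ring
  · show deriv (fun s => Fvec lam (Function.update ![S,U,P] 2 s) 0) P = _
    rw [show (fun s => Fvec lam (Function.update ![S,U,P] 2 s) 0)
        = fun s : ℝ => (-1/(3*Real.sqrt 3) - (2/3)*S + S^2/Real.sqrt 3 + U^2/Real.sqrt 3 + 2*S^3 - S*U^2)
            + 0*s + (1/(2*Real.sqrt 3) + S)*s^2 + 0*s^3
      from funext fun s => by simp [Fvec, Function.update_apply]; try ring; try exact Or.inl trivial, cubic_deriv]
    simp only [Matrix.of_apply, Matrix.cons_val', Matrix.cons_val_zero, Matrix.empty_val',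
      Matrix.cons_val_fin_one, Matrix.cons_val_one, Matrix.head_cons,
      Matrix.head_fin_const, Fin.zero_eta, Fin.mk_one, Fin.reduceFinMk, Matrix.cons_val_two,
      Matrix.tail_cons]
    ring
  · show deriv (fun s => Fvec lam (Function.update ![S,U,P] 0 s) 1) S = _
    rw [show (fun s => Fvec lam (Function.update ![S,U,P] 0 s) 1)
        = fun s : ℝ => U*(1/3 - lam/2*P - U^2 + P^2) + 0*s + (2*U)*s^2 + 0*s^3
      from funext fun s => by simp [Fvec, Function.update_apply]; try ring; try exact Or.inl trivial, cubic_deriv]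
    simp only [Matrix.of_apply, Matrix.cons_val', Matrix.cons_val_zero, Matrix.empty_val',
      Matrix.cons_val_fin_one, Matrix.cons_val_one, Matrix.head_cons,
      Matrix.head_fin_const, Fin.zero_eta, Fin.mk_one, Fin.reduceFinMk, Matrix.cons_val_two,
      Matrix.tail_cons]
    ring
  · show deriv (fun s => Fvec lam (Function.update ![S,U,P] 1 s) 1) U = _
    rw [show (fun s => Fvec lam (Function.update ![S,U,P] 1 s) 1)
        = fun s : ℝ => 0 + (1/3 - lam/2*P + 2*S^2 + P^2)*s + 0*s^2 + (-1)*s^3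
      from funext fun s => by simp [Fvec, Function.update_apply]; try ring; try exact Or.inl trivial, cubic_deriv]
    simp only [Matrix.of_apply, Matrix.cons_val', Matrix.cons_val_zero, Matrix.empty_val',
      Matrix.cons_val_fin_one, Matrix.cons_val_one, Matrix.head_cons,
      Matrix.head_fin_const, Fin.zero_eta, Fin.mk_one, Fin.reduceFinMk, Matrix.cons_val_two,
      Matrix.tail_cons]
    ring
  · show deriv (fun s => Fvec lam (Function.update ![S,U,P] 2 s) 1) P = _
    rw [show (fun s => Fvec lam (Function.update ![S,U,P] 2 s) 1)
        = fun s : ℝ => U*(1/3 + 2*S^2 - U^2) + (-(U*(lam/2)))*s + U*s^2 + 0*s^3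
      from funext fun s => by simp [Fvec, Function.update_apply]; try ring; try exact Or.inl trivial, cubic_deriv]
    simp only [Matrix.of_apply, Matrix.cons_val', Matrix.cons_val_zero, Matrix.empty_val',
      Matrix.cons_val_fin_one, Matrix.cons_val_one, Matrix.head_cons,
      Matrix.head_fin_const, Fin.zero_eta, Fin.mk_one, Fin.reduceFinMk, Matrix.cons_val_two,
      Matrix.tail_cons]
    ring
  · show deriv (fun s => Fvec lam (Function.update ![S,U,P] 0 s) 2) S = _
    rw [show (fun s => Fvec lam (Function.update ![S,U,P] 0 s) 2)
        = fun s : ℝ => (-(2/3)*P + lam*U^2 - U^2*P + P^3) + 0*s + (2*P)*s^2 + 0*s^3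
      from funext fun s => by simp [Fvec, Function.update_apply]; try ring; try exact Or.inl trivial, cubic_deriv]
    simp only [Matrix.of_apply, Matrix.cons_val', Matrix.cons_val_zero, Matrix.empty_val',
      Matrix.cons_val_fin_one, Matrix.cons_val_one, Matrix.head_cons,
      Matrix.head_fin_const, Fin.zero_eta, Fin.mk_one, Fin.reduceFinMk, Matrix.cons_val_two,
      Matrix.tail_cons]
    ring
  · show deriv (fun s => Fvec lam (Function.update ![S,U,P] 1 s) 2) U = _
    rw [show (fun s => Fvec lam (Function.update ![S,U,P] 1 s) 2)
        = fun s : ℝ => (-(2/3)*P + 2*S^2*P + P^3) + 0*s + (lam - P)*s^2 + 0*s^3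
      from funext fun s => by simp [Fvec, Function.update_apply]; try ring; try exact Or.inl trivial, cubic_deriv]
    simp only [Matrix.of_apply, Matrix.cons_val', Matrix.cons_val_zero, Matrix.empty_val',
      Matrix.cons_val_fin_one, Matrix.cons_val_one, Matrix.head_cons,
      Matrix.head_fin_const, Fin.zero_eta, Fin.mk_one, Fin.reduceFinMk, Matrix.cons_val_two,
      Matrix.tail_cons]
    ring
  · show deriv (fun s => Fvec lam (Function.update ![S,U,P] 2 s) 2) P = _
    rw [show (fun s => Fvec lam (Function.update ![S,U,P] 2 s) 2)
        = fun s : ℝ => lam*U^2 + (-(2/3) + 2*S^2 - U^2)*s + 0*s^2 + 1*s^3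
      from funext fun s => by simp [Fvec, Function.update_apply]; try ring; try exact Or.inl trivial, cubic_deriv]
    simp only [Matrix.of_apply, Matrix.cons_val', Matrix.cons_val_zero, Matrix.empty_val',
      Matrix.cons_val_fin_one, Matrix.cons_val_one, Matrix.head_cons,
      Matrix.head_fin_const, Fin.zero_eta, Fin.mk_one, Fin.reduceFinMk, Matrix.cons_val_two,
      Matrix.tail_cons]
    ring


open Polynomial in
/-- For `λ > 0`, the characteristic polynomial of the
Jacobian of the reduced vector field at the critical point
`P₃ = ((2−λ²)/(2√3(λ²+1)), √(λ²+2)/(√2(λ²+1)), λ/(λ²+1))` factors as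
`(X + (λ²+2)/(2(λ²+1)))·(X² + ((λ²+2)/(2(λ²+1)))X + (λ²+2)(λ²−2)/(2(λ²+1)²))`;
equivalently (when `7λ² ≤ 18`, so that all roots are real) the eigenvalues are
`ε₁ = −(λ²+2)/(2(λ²+1))` and
`ε₂,₃ = (−(λ²+2) ± √((18−7λ²)(λ²+2)))/(4(λ²+1))`. -/
theorem charpoly_at_P3 (lam : ℝ) (hlam : 0 < lam) :
    (jac lam ![(2 - lam ^ 2) / (2 * Real.sqrt 3 * (lam ^ 2 + 1)),
        Real.sqrt (lam ^ 2 + 2) / (Real.sqrt 2 * (lam ^ 2 + 1)),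
        lam / (lam ^ 2 + 1)]).charpoly
        = (X + C ((lam ^ 2 + 2) / (2 * (lam ^ 2 + 1))))
            * (X ^ 2 + C ((lam ^ 2 + 2) / (2 * (lam ^ 2 + 1))) * X
                + C ((lam ^ 2 + 2) * (lam ^ 2 - 2) / (2 * (lam ^ 2 + 1) ^ 2))) ∧
      (7 * lam ^ 2 ≤ 18 →
        (jac lam ![(2 - lam ^ 2) / (2 * Real.sqrt 3 * (lam ^ 2 + 1)),
            Real.sqrt (lam ^ 2 + 2) / (Real.sqrt 2 * (lam ^ 2 + 1)),
            lam / (lam ^ 2 + 1)]).charpoly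
          = (X - C (-(lam ^ 2 + 2) / (2 * (lam ^ 2 + 1))))
              * (X - C ((-(lam ^ 2 + 2)
                    + Real.sqrt ((18 - 7 * lam ^ 2) * (lam ^ 2 + 2)))
                  / (4 * (lam ^ 2 + 1))))
              * (X - C ((-(lam ^ 2 + 2)
                    - Real.sqrt ((18 - 7 * lam ^ 2) * (lam ^ 2 + 2)))
                  / (4 * (lam ^ 2 + 1))))) := by
  set a := Real.sqrt 3 with ha_def
  set b := Real.sqrt 2 with hb_def
  set u := Real.sqrt (lam ^ 2 + 2) with hu_def
  have ha2 : a ^ 2 = 3 := Real.sq_sqrt (by norm_num)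
  have hb2 : b ^ 2 = 2 := Real.sq_sqrt (by norm_num)
  have hu2 : u ^ 2 = lam ^ 2 + 2 := Real.sq_sqrt (by positivity)
  have ha0 : a ≠ 0 := by rw [ha_def]; positivity
  have hb0 : b ≠ 0 := by rw [hb_def]; positivity
  have hd0 : lam ^ 2 + 1 ≠ 0 := by positivity
  have ha3 : a ^ 3 = 3 * a := by rw [pow_succ, ha2]
  have ha4 : a ^ 4 = 9 := by rw [show (4:ℕ) = 2*2 from rfl, pow_mul, ha2]; norm_num
  have hb3 : b ^ 3 = 2 * b := by rw [pow_succ, hb2]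
  have hb4 : b ^ 4 = 4 := by rw [show (4:ℕ) = 2*2 from rfl, pow_mul, hb2]; norm_num
  have hu3 : u ^ 3 = (lam ^ 2 + 2) * u := by rw [pow_succ, hu2]
  have hu4 : u ^ 4 = (lam ^ 2 + 2)^2 := by rw [show (4:ℕ) = 2*2 from rfl, pow_mul, hu2]
  have hd0' : (0:ℝ) < lam ^ 2 + 1 := by positivity
  obtain ⟨d, hd⟩ : ∃ d : ℝ, d = lam ^ 2 + 1 := ⟨_, rfl⟩
  have hdpos : 0 < d := hd ▸ hd0'
  have hdne : d ≠ 0 := ne_of_gt hdpos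
  have ha5 : a ^ 5 = 9 * a := by rw [show a^5 = (a^2)^2*a by ring, ha2]; norm_num
  have ha6 : a ^ 6 = 27 := by rw [show a^6 = (a^2)^3 by ring, ha2]; norm_num
  have ha7 : a ^ 7 = 27 * a := by rw [show a^7 = (a^2)^3*a by ring, ha2]; norm_num
  have ha8 : a ^ 8 = 81 := by rw [show a^8 = (a^2)^4 by ring, ha2]; norm_num
  have hb5 : b ^ 5 = 4 * b := by rw [show b^5 = (b^2)^2*b by ring, hb2]; norm_num
  have hb6 : b ^ 6 = 8 := by rw [show b^6 = (b^2)^3 by ring, hb2]; norm_num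
  have hb7 : b ^ 7 = 8 * b := by rw [show b^7 = (b^2)^3*b by ring, hb2]; norm_num
  have hb8 : b ^ 8 = 16 := by rw [show b^8 = (b^2)^4 by ring, hb2]; norm_num
  have hu5 : u ^ 5 = (lam ^ 2 + 2)^2 * u := by rw [show u^5 = (u^2)^2*u by ring, hu2]
  have hu6 : u ^ 6 = (lam ^ 2 + 2)^3 := by rw [show u^6 = (u^2)^3 by ring, hu2]
  have hu7 : u ^ 7 = (lam ^ 2 + 2)^3 * u := by rw [show u^7 = (u^2)^3*u by ring, hu2]
  have hu8 : u ^ 8 = (lam ^ 2 + 2)^4 := by rw [show u^8 = (u^2)^4 by ring, hu2]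
  have key0 : jac lam ![(2 - lam ^ 2) / (2 * a * (lam ^ 2 + 1)),
      u / (b * (lam ^ 2 + 1)), lam / (lam ^ 2 + 1)]
      = !![ -(lam^4+5*lam^2-2)/(2*d^2), 3*lam^2*u/(a*b*d^2), 3*lam/(a*d^2);
            2*(2-lam^2)*u/(a*b*d^2), -(lam^2+2)/d^2, lam*u*(3-lam^2)/(2*b*d^2);
            2*lam*(2-lam^2)/(a*d^2), 2*lam^3*u/(b*d^2), -(lam^4-lam^2+2)/(2*d^2) ] := by
    rw [jac_eq]
    refine Matrix.ext fun i j => ?_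
    fin_cases i <;> fin_cases j <;>
      simp only [Matrix.of_apply, Matrix.cons_val', Matrix.cons_val_zero, Matrix.empty_val',
        Matrix.cons_val_fin_one, Matrix.cons_val_one, Matrix.head_cons,
        Matrix.head_fin_const, Fin.zero_eta, Fin.mk_one, Fin.reduceFinMk, Matrix.cons_val_two,
        Matrix.tail_cons, ← hd] <;>
      field_simp <;>
      ring_nf <;>
      simp only [ha2, ha3, ha4, ha5, ha6, ha7, ha8, hb2, hb3, hb4, hb5, hb6, hb7, hb8,
        hu2, hu3, hu4, hu5, hu6, hu7, hu8, hd] <;>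
      ring
  have key : (jac lam ![(2 - lam ^ 2) / (2 * a * (lam ^ 2 + 1)),
      u / (b * (lam ^ 2 + 1)), lam / (lam ^ 2 + 1)]).charpoly
      = (X + C ((lam ^ 2 + 2) / (2 * (lam ^ 2 + 1))))
          * (X ^ 2 + C ((lam ^ 2 + 2) / (2 * (lam ^ 2 + 1))) * X
              + C ((lam ^ 2 + 2) * (lam ^ 2 - 2) / (2 * (lam ^ 2 + 1) ^ 2))) := by
    rw [key0, charpoly_fin3']
    simp only [Matrix.of_apply, Matrix.cons_val', Matrix.cons_val_zero, Matrix.empty_val',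
      Matrix.cons_val_fin_one, Matrix.cons_val_one, Matrix.head_cons,
      Matrix.head_fin_const, Fin.zero_eta, Fin.mk_one, Fin.reduceFinMk, Matrix.cons_val_two,
      Matrix.tail_cons, ← hd]
    apply cubic_factor
    · field_simp
      ring_nf
      simp only [ha2, ha3, ha4, ha5, ha6, ha7, ha8, hb2, hb3, hb4, hb5, hb6, hb7, hb8,
        hu2, hu3, hu4, hu5, hu6, hu7, hu8, hd]
      ring
    · field_simp
      ring_nf
      simp only [ha2, ha3, ha4, ha5, ha6, ha7, ha8, hb2, hb3, hb4, hb5, hb6, hb7, hb8,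
        hu2, hu3, hu4, hu5, hu6, hu7, hu8, hd]
      ring
    · field_simp
      ring_nf
      simp only [ha2, ha3, ha4, ha5, ha6, ha7, ha8, hb2, hb3, hb4, hb5, hb6, hb7, hb8,
        hu2, hu3, hu4, hu5, hu6, hu7, hu8, hd]
      ring
  refine ⟨key, fun h7 => ?_⟩
  rw [key]
  have hD : (0:ℝ) ≤ (18 - 7 * lam ^ 2) * (lam ^ 2 + 2) := by nlinarith
  have hs2 : Real.sqrt ((18 - 7 * lam ^ 2) * (lam ^ 2 + 2)) ^ 2
      = (18 - 7 * lam ^ 2) * (lam ^ 2 + 2) := Real.sq_sqrt hD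
  set s := Real.sqrt ((18 - 7 * lam ^ 2) * (lam ^ 2 + 2)) with hs_def
  have e1 : ((X:ℝ[X]) - C ((-(lam^2+2)+s)/(4*(lam^2+1))))
        * (X - C ((-(lam^2+2)-s)/(4*(lam^2+1))))
      = X^2 + C ((lam^2+2)/(2*(lam^2+1))) * X
        + C ((lam^2+2)*(lam^2-2)/(2*(lam^2+1)^2)) := by
    refine quad_factor _ _ _ _ ?_ ?_
    · field_simp
      ring
    · rw [div_mul_div_comm,
        show (-(lam^2+2)+s)*(-(lam^2+2)-s) = (lam^2+2)^2 - s^2 by ring, hs2]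
      rw [div_eq_div_iff (by positivity) (by positivity)]
      ring
  have e2 : (X:ℝ[X]) - C (-(lam^2+2)/(2*(lam^2+1)))
      = X + C ((lam^2+2)/(2*(lam^2+1))) := by
    rw [show -(lam^2+2)/(2*(lam^2+1)) = -((lam^2+2)/(2*(lam^2+1))) by ring,
      map_neg, sub_neg_eq_add]
  rw [mul_assoc, e1, e2]
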